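/- arXiv:1707.03479 — 2 statements merged into one kernel-verified Lean document; each statement's English description precedes it below -/
import Mathlib

section
/- Let X and Y be schemes of finite type over a finite field F_q, with Hasse-Weil zeta functions Z(X,t), Z(Y,t), Z(X ×_{F_q} Y, t) ∈ ℚ[[t]]. Then for every n ≥ 1, the n-th ghost coordinate of Z(X ×_{F_q} Y, t) equals the product of the n-th ghost coordinates of Z(X,t) and Z(Y,t): gh_n(Z(X ×_{F_q} Y, t)) = gh_n(Z(X,t)) · gh_n(Z(Y,t)). (This is the statement that Z(X ×_{F_q} Y, t) = Z(X,t) *_W Z(Y,t), the product in the big Witt ring W(ℤ), since a power series over ℤ is determined by its ghost coordinates and Witt multiplication is pointwise multiplication of ghost coordinates.) -/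
open AlgebraicGeometry CategoryTheory

noncomputable section

/-- The set `X(K)` of `K`-points of a scheme `X` over `Spec k`. -/
def ptsOver (k : Type) [Field k] (K : Type) [Field K] [Algebra k K]
    (X : Scheme) (f : X ⟶ Spec (CommRingCat.of k)) : Type :=
  { g : Spec (CommRingCat.of K) ⟶ X //
      g ≫ f = Spec.map (CommRingCat.ofHom (algebraMap k K)) }

/-- The exponential `exp(L(t))` of a power series `L` over `ℚ` (intended for `L` with
zero constant coefficient). -/
def expComp (L : PowerSeries ℚ) : PowerSeries ℚ :=
  PowerSeries.mk fun n =>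
    ∑ j ∈ Finset.range (n + 1), PowerSeries.coeff n (L ^ j) / (Nat.factorial j : ℚ)

/-- The Hasse-Weil zeta function `exp(∑_{r≥1} N_r tʳ/r)` attached to a point-count
function `N : ℕ → ℕ`. -/
def zetaOfCounts (N : ℕ → ℕ) : PowerSeries ℚ :=
  expComp (PowerSeries.mk fun r => if r = 0 then 0 else (N r : ℚ) / r)

/-- The `n`-th ghost coordinate of a power series `P` (with constant coefficient `1`)
over `ℚ`: the `n`-th coefficient of `t·P'(t)/P(t)`. -/
def ghost (n : ℕ) (P : PowerSeries ℚ) : ℚ :=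
  PowerSeries.coeff n (PowerSeries.X * P.derivativeFun * P⁻¹)

namespace WittAux

open PowerSeries

lemma coeff_pow_eq_zero {L : ℚ⟦X⟧} (hL : constantCoeff L = 0)
    {b j : ℕ} (h : b < j) : coeff b (L ^ j) = 0 :=
  X_pow_dvd_iff.mp (pow_dvd_pow_of_dvd (X_dvd_iff.mpr hL) j) b h

lemma coeff_D (f : ℚ⟦X⟧) (n : ℕ) :
    coeff n (X * f.derivativeFun) = n * coeff n f := by
  cases n with
  | zero =>
    simp [coeff_zero_eq_constantCoeff, map_mul]
  | succ m =>
    rw [coeff_succ_X_mul, show f.derivativeFun = derivative ℚ f from rfl, coeff_derivative]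
    push_cast; ring

lemma D_mul (f g : ℚ⟦X⟧) :
    X * (f * g).derivativeFun =
      f * (X * g.derivativeFun) + g * (X * f.derivativeFun) := by
  rw [derivativeFun_mul, smul_eq_mul, smul_eq_mul]
  ring

lemma D_pow (L : ℚ⟦X⟧) (j : ℕ) :
    X * (L ^ (j + 1)).derivativeFun =
      C ((j : ℚ) + 1) * (L ^ j * (X * L.derivativeFun)) := by
  induction j with
  | zero => simp
  | succ i ih =>
    rw [pow_succ, mul_comm (L ^ (i+1)) L, D_mul, ih]
    have hC : (C ((↑(i+1) : ℚ) + 1)) = C ((i : ℚ) + 1) + 1 := by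
      push_cast
      rw [map_add, map_one]
    rw [hC]
    ring

lemma coeff_expComp (L : ℚ⟦X⟧) (n : ℕ) :
    coeff n (expComp L) =
      ∑ j ∈ Finset.range (n + 1), coeff n (L ^ j) / (Nat.factorial j : ℚ) := by
  unfold expComp
  rw [coeff_mk]

lemma constantCoeff_expComp (L : ℚ⟦X⟧) :
    constantCoeff (expComp L) = 1 := by
  rw [← coeff_zero_eq_constantCoeff_apply, coeff_expComp]
  simp

lemma expComp_key {L : ℚ⟦X⟧} (hL : constantCoeff L = 0) :
    X * (expComp L).derivativeFun = expComp L * (X * L.derivativeFun) := by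
  ext n
  rw [coeff_D, coeff_expComp, Finset.mul_sum]
  have step1 : ∀ j ∈ Finset.range (n + 1),
      (n : ℚ) * (coeff n (L ^ j) / (Nat.factorial j : ℚ)) =
        coeff n (X * (L ^ j).derivativeFun) / (Nat.factorial j : ℚ) := by
    intro j _
    rw [coeff_D]
    ring
  rw [Finset.sum_congr rfl step1]
  -- rewrite each term with j = i + 1 using D_pow; j = 0 term is 0
  have step2 : ∑ j ∈ Finset.range (n + 1),
      coeff n (X * (L ^ j).derivativeFun) / (Nat.factorial j : ℚ) =
      ∑ i ∈ Finset.range n,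
        coeff n (L ^ i * (X * L.derivativeFun)) / (Nat.factorial i : ℚ) := by
    rw [Finset.sum_range_succ'] -- splits off j = 0
    simp only [pow_zero, derivativeFun_one, mul_zero, map_zero, zero_div, add_zero]
    apply Finset.sum_congr rfl
    intro i _
    rw [D_pow, coeff_C_mul, Nat.factorial_succ]
    push_cast
    have h1 : (Nat.factorial i : ℚ) ≠ 0 := Nat.cast_ne_zero.mpr (Nat.factorial_ne_zero i)
    field_simp
  rw [step2]
  -- now compute the RHS
  rw [coeff_mul]
  have hswap : ∑ i ∈ Finset.range n,
      coeff n (L ^ i * (X * L.derivativeFun)) / (Nat.factorial i : ℚ) =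
      ∑ p ∈ Finset.HasAntidiagonal.antidiagonal n, ∑ i ∈ Finset.range n,
        (coeff p.1 (L ^ i) / (Nat.factorial i : ℚ)) *
          coeff p.2 (X * L.derivativeFun) := by
    rw [Finset.sum_comm]
    apply Finset.sum_congr rfl
    intro i _
    rw [coeff_mul, Finset.sum_div]
    apply Finset.sum_congr rfl
    intro p _
    ring
  rw [hswap]
  apply Finset.sum_congr rfl
  intro p hp
  rw [← Finset.sum_mul, coeff_expComp]
  rcases Nat.eq_zero_or_pos p.2 with h2 | h2
  · simp [h2, coeff_D]
  · have hpn : p.1 + p.2 = n := Finset.HasAntidiagonal.mem_antidiagonal.mp hp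
    have hle : p.1 + 1 ≤ n := by omega
    congr 1
    refine (Finset.sum_subset (Finset.range_subset_range.mpr hle) ?_).symm
    intro i _ hi
    have hlt : p.1 < i := by
      simpa using fun h => hi (Finset.mem_range.mpr h)
    rw [coeff_pow_eq_zero hL hlt, zero_div]

lemma ghost_expComp {L : ℚ⟦X⟧} (hL : constantCoeff L = 0) (n : ℕ) :
    ghost n (expComp L) = coeff n (X * L.derivativeFun) := by
  have h1 : constantCoeff (expComp L) ≠ 0 := by
    rw [constantCoeff_expComp]; exact one_ne_zero
  unfold ghost
  rw [expComp_key hL, mul_comm (expComp L), mul_assoc,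
    PowerSeries.mul_inv_cancel _ h1, mul_one]

lemma ghost_zetaOfCounts (N : ℕ → ℕ) (n : ℕ) (hn : 1 ≤ n) :
    ghost n (zetaOfCounts N) = N n := by
  set L : ℚ⟦X⟧ := PowerSeries.mk fun r => if r = 0 then 0 else (N r : ℚ) / r with hLdef
  have hL : constantCoeff L = 0 := by
    rw [hLdef, ← coeff_zero_eq_constantCoeff_apply, coeff_mk]; simp
  rw [zetaOfCounts, ← hLdef, ghost_expComp hL, coeff_D, hLdef, coeff_mk,
    if_neg (by omega : n ≠ 0)]
  have : (n : ℚ) ≠ 0 := Nat.cast_ne_zero.mpr (by omega)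
  field_simp

/-- `(X ×ₖ Y)(K) ≃ X(K) × Y(K)`. -/
def pullbackPtsEquiv (k : Type) [Field k] (K : Type) [Field K] [Algebra k K]
    (X Y : Scheme) (f : X ⟶ Spec (CommRingCat.of k)) (g : Y ⟶ Spec (CommRingCat.of k)) :
    ptsOver k K (Limits.pullback f g) (Limits.pullback.fst f g ≫ f) ≃
      ptsOver k K X f × ptsOver k K Y g where
  toFun h :=
    (⟨h.1 ≫ Limits.pullback.fst f g, by rw [Category.assoc]; exact h.2⟩,
     ⟨h.1 ≫ Limits.pullback.snd f g, by
        rw [Category.assoc, ← Limits.pullback.condition, ← Category.assoc,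
          Category.assoc]
        exact h.2⟩)
  invFun p :=
    ⟨Limits.pullback.lift p.1.1 p.2.1 (by rw [p.1.2, p.2.2]), by
      rw [← Category.assoc, Limits.pullback.lift_fst]
      exact p.1.2⟩
  left_inv h := by
    apply Subtype.ext
    apply Limits.pullback.hom_ext
    · rw [Limits.pullback.lift_fst]
    · rw [Limits.pullback.lift_snd]
  right_inv p := by
    refine Prod.ext (Subtype.ext ?_) (Subtype.ext ?_)
    · exact Limits.pullback.lift_fst _ _ _
    · exact Limits.pullback.lift_snd _ _ _

end WittAux

/-- **The zeta function of a product is the Witt product of the zeta functions.**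
Let `X`, `Y` be schemes of finite type over a finite field `k = F_q`, with `K r` a
degree-`r` extension of `k`, and let `Z(X,t) = exp(∑_{r≥1} #X(K r) tʳ/r)` be the
Hasse-Weil zeta function.  Then for every `n ≥ 1`,
`gh_n(Z(X ×_k Y, t)) = gh_n(Z(X,t)) · gh_n(Z(Y,t))`, which is precisely the statement
that `Z(X ×_k Y, t) = Z(X,t) *_W Z(Y,t)` in the big Witt ring `W(ℤ)`. -/
theorem zeta_of_product_is_witt_product
    {k : Type} [Field k] [Fintype k]
    (K : ℕ → Type) [∀ r, Field (K r)] [∀ r, Algebra k (K r)]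
    (hK : ∀ r, 1 ≤ r → Module.finrank k (K r) = r)
    (X Y : Scheme) (f : X ⟶ Spec (CommRingCat.of k)) (g : Y ⟶ Spec (CommRingCat.of k))
    [LocallyOfFiniteType f] [QuasiCompact f] [LocallyOfFiniteType g] [QuasiCompact g]
    (n : ℕ) (hn : 1 ≤ n) :
    ghost n (zetaOfCounts fun r =>
        Nat.card (ptsOver k (K r) (Limits.pullback f g) (Limits.pullback.fst f g ≫ f))) =
      ghost n (zetaOfCounts fun r => Nat.card (ptsOver k (K r) X f)) *
        ghost n (zetaOfCounts fun r => Nat.card (ptsOver k (K r) Y g)) := by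
  have hcard : ∀ r,
      Nat.card (ptsOver k (K r) (Limits.pullback f g) (Limits.pullback.fst f g ≫ f)) =
        Nat.card (ptsOver k (K r) X f) * Nat.card (ptsOver k (K r) Y g) := fun r => by
    rw [Nat.card_congr (WittAux.pullbackPtsEquiv k (K r) X Y f g), Nat.card_prod]
  simp only [hcard]
  rw [WittAux.ghost_zetaOfCounts _ n hn, WittAux.ghost_zetaOfCounts _ n hn,
    WittAux.ghost_zetaOfCounts _ n hn]
  push_cast
  ring

end
end

section
/- Let X be a scheme of finite type over a finite field F_q, let r ≥ 1, and let X_{F_{q^r}} = X ×_{Spec F_q} Spec F_{q^r} denote the base change, viewed as a scheme over F_{q^r}. Then for every n ≥ 1 there is a natural bijection between the set of F_{q^r}-morphisms Spec F_{q^{nr}} → X_{F_{q^r}} and the set of F_q-morphisms Spec F_{q^{nr}} → X; hence N_n(X_{F_{q^r}} / F_{q^r}) = N_{nr}(X / F_q). Consequently, the ghost coordinates satisfy gh_n(Z(X_{F_{q^r}}/F_{q^r}, t)) = gh_{nr}(Z(X/F_q, t)) for all n, i.e., Fr_r(Z(X/F_q, t)) = Z(X_{F_{q^r}}/F_{q^r},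 t): the Frobenius operator Fr_r on the Witt ring corresponds to base change to F_{q^r}. -/
open AlgebraicGeometry CategoryTheory

noncomputable section

/-! ### Auxiliary power series lemmas -/

namespace FrobAux

open PowerSeries

variable {L : ℚ⟦X⟧}

lemma coeff_derivativeFun' (f : ℚ⟦X⟧) (n : ℕ) :
    coeff n (derivativeFun f) = coeff (n + 1) f * (n + 1) :=
  coeff_derivative f n

lemma coeff_pow_zero (h : constantCoeff L = 0) {n j : ℕ} (hnj : n < j) :
    coeff n (L ^ j) = 0 :=
  X_pow_dvd_iff.mp (pow_dvd_pow_of_dvd (X_dvd_iff.mpr h) j) n hnj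

/-- Truncated exponential sum. -/
def expS (L : ℚ⟦X⟧) (M : ℕ) : ℚ⟦X⟧ :=
  ∑ j ∈ Finset.range M, ((Nat.factorial j : ℚ)⁻¹) • L ^ j

lemma coeff_expS (M m : ℕ) : coeff m (expS L M) =
    ∑ j ∈ Finset.range M, coeff m (L ^ j) / (Nat.factorial j : ℚ) := by
  simp [expS, div_eq_inv_mul]

lemma coeff_expComp_eq_expS (h : constantCoeff L = 0) {m M : ℕ} (hmM : m < M) :
    coeff m (expComp L) = coeff m (expS L M) := by
  rw [expComp, coeff_mk, coeff_expS]
  rcases Nat.exists_eq_add_of_le (Nat.succ_le_of_lt hmM) with ⟨d, rfl⟩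
  conv_rhs => rw [show m.succ + d = (m + 1) + d from rfl, Finset.sum_range_add]
  have : ∀ i ∈ Finset.range d, coeff m (L ^ (m + 1 + i)) / (Nat.factorial (m+1+i) : ℚ) = 0 := by
    intro i _
    rw [coeff_pow_zero h (by omega), zero_div]
  rw [Finset.sum_eq_zero this, add_zero]

lemma derivativeFun_pow' (j : ℕ) :
    derivativeFun (L ^ (j+1)) = ((j:ℚ)+1) • (L ^ j * derivativeFun L) := by
  induction j with
  | zero => simp
  | succ j ih =>
    rw [pow_succ' L (j+1), derivativeFun_mul, ih]
    simp only [smul_eq_C_mul, smul_eq_mul, map_add, map_one, map_natCast]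
    push_cast
    ring

lemma derivativeFun_sum {ι : Type*} (s : Finset ι) (f : ι → ℚ⟦X⟧) :
    derivativeFun (∑ i ∈ s, f i) = ∑ i ∈ s, derivativeFun (f i) := by
  classical
  induction s using Finset.induction with
  | empty =>
    simp only [Finset.sum_empty]
    ext m
    rw [coeff_derivativeFun']
    simp
  | insert _ _ h ih => rw [Finset.sum_insert h, Finset.sum_insert h, derivativeFun_add, ih]

lemma derivativeFun_expComp (h : constantCoeff L = 0) :
    derivativeFun (expComp L) = derivativeFun L * expComp L := by
  ext n
  have key : derivativeFun (expS L (n+2)) = expS L (n+1) * derivativeFun L := by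
    simp only [expS]
    rw [derivativeFun_sum, Finset.sum_range_succ', Finset.sum_mul]
    simp only [derivativeFun_smul, pow_zero, derivativeFun_one, smul_zero, add_zero]
    refine Finset.sum_congr rfl fun j _ => ?_
    rw [derivativeFun_pow', smul_smul, smul_mul_assoc]
    congr 1
    rw [Nat.factorial_succ]
    push_cast
    rw [mul_inv]
    field_simp
  have h1 : coeff n (derivativeFun (expComp L)) = coeff n (derivativeFun (expS L (n+2))) := by
    rw [coeff_derivativeFun', coeff_derivativeFun',
      coeff_expComp_eq_expS h (show n + 1 < n + 2 by omega)]
  rw [h1, key, mul_comm (expS L (n+1)), coeff_mul, coeff_mul]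
  refine Finset.sum_congr rfl fun p hp => ?_
  rw [Finset.HasAntidiagonal.mem_antidiagonal] at hp
  rw [coeff_expComp_eq_expS h (show p.2 < n + 1 by omega)]

lemma constantCoeff_expComp : constantCoeff (expComp L) = 1 := by
  rw [← coeff_zero_eq_constantCoeff, expComp, coeff_mk]
  simp

/-- The `n`-th ghost coordinate of the zeta function is the `n`-th point count. -/
lemma ghost_zetaOfCounts (N : ℕ → ℕ) {n : ℕ} (hn : 1 ≤ n) :
    ghost n (zetaOfCounts N) = N n := by
  set L : ℚ⟦X⟧ := PowerSeries.mk fun r => if r = 0 then 0 else (N r : ℚ) / r with hLdef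
  have hL : constantCoeff L = 0 := by
    rw [← coeff_zero_eq_constantCoeff, hLdef, coeff_mk, if_pos rfl]
  have hZ : constantCoeff (zetaOfCounts N) ≠ 0 := by
    rw [zetaOfCounts, constantCoeff_expComp]; norm_num
  have hmain : (X : ℚ⟦X⟧) * (zetaOfCounts N).derivativeFun * (zetaOfCounts N)⁻¹ =
      X * derivativeFun L := by
    have : (zetaOfCounts N).derivativeFun = derivativeFun L * zetaOfCounts N :=
      derivativeFun_expComp hL
    rw [this]
    calc (X :ℚ⟦X⟧) * (derivativeFun L * zetaOfCounts N) * (zetaOfCounts N)⁻¹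
        = X * derivativeFun L * (zetaOfCounts N * (zetaOfCounts N)⁻¹) := by ring
      _ = X * derivativeFun L := by
        rw [PowerSeries.mul_inv_cancel _ hZ, mul_one]
  rcases Nat.exists_eq_add_of_le hn with ⟨m, rfl⟩
  rw [ghost, hmain, show 1 + m = m + 1 by omega, coeff_succ_X_mul, coeff_derivativeFun',
    hLdef, coeff_mk, if_neg (by omega)]
  push_cast
  field_simp

end FrobAux

/-- The universal property of the fiber product: `K`-points of the base change. -/
def ptsOverEquiv {k : Type} [Field k] (Kr Knr : Type) [Field Kr] [Field Knr]
    [Algebra k Kr] [Algebra k Knr] [Algebra Kr Knr] [IsScalarTower k Kr Knr]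
    (X : Scheme) (f : X ⟶ Spec (CommRingCat.of k)) :
    ptsOver Kr Knr (Limits.pullback f (Spec.map (CommRingCat.ofHom (algebraMap k Kr))))
        (Limits.pullback.snd f (Spec.map (CommRingCat.ofHom (algebraMap k Kr)))) ≃
      ptsOver k Knr X f := by
  set u := Spec.map (CommRingCat.ofHom (algebraMap k Kr)) with hu
  have htower : Spec.map (CommRingCat.ofHom (algebraMap Kr Knr)) ≫ u =
      Spec.map (CommRingCat.ofHom (algebraMap k Knr)) := by
    rw [hu, ← Spec.map_comp]
    congr 1
    rw [IsScalarTower.algebraMap_eq k Kr Knr]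
    rfl
  exact
  { toFun := fun g =>
      ⟨g.1 ≫ Limits.pullback.fst f u, by
        rw [Category.assoc, Limits.pullback.condition, ← Category.assoc, g.2, htower]⟩
    invFun := fun h =>
      ⟨Limits.pullback.lift h.1 (Spec.map (CommRingCat.ofHom (algebraMap Kr Knr)))
          (by rw [h.2, ← htower]),
        Limits.pullback.lift_snd _ _ _⟩
    left_inv := fun g =>
      Subtype.ext (Limits.pullback.hom_ext (Limits.pullback.lift_fst _ _ _)
        ((Limits.pullback.lift_snd _ _ _).trans g.2.symm))
    right_inv := fun h => Subtype.ext (Limits.pullback.lift_fst _ _ _) }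

/-- **Witt-ring Frobenius corresponds to base change.**
Let `X` be a scheme of finite type over a finite field `k = F_q`, `K m` a degree-`m`
extension of `k`, and fix `r ≥ 1`.  Let `X_{q^r} = X ×_{Spec k} Spec (K r)` be the
base change, a scheme over `K r` via the second projection.  Then for every `n ≥ 1`
there is a natural bijection between `K r`-morphisms `Spec K(nr) ⟶ X_{q^r}` and
`k`-morphisms `Spec K(nr) ⟶ X`; hence `N_n(X_{q^r}/K r) = N_{nr}(X/k)`, and the
ghost coordinates of the zeta functions satisfy
`gh_n(Z(X_{q^r}/K r, t)) = gh_{nr}(Z(X/k, t))`, i.e.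
`Fr_r(Z(X/k,t)) = Z(X_{q^r}/K r, t)`. -/
theorem frobenius_corresponds_to_base_change
    {k : Type} [Field k] [Fintype k]
    (K : ℕ → Type) [∀ m, Field (K m)] [∀ m, Algebra k (K m)]
    (hK : ∀ m, 1 ≤ m → Module.finrank k (K m) = m)
    (X : Scheme) (f : X ⟶ Spec (CommRingCat.of k))
    [LocallyOfFiniteType f] [QuasiCompact f]
    (r : ℕ) (hr : 1 ≤ r)
    [∀ m, Algebra (K r) (K (m * r))] [∀ m, IsScalarTower k (K r) (K (m * r))] :
    (∀ n : ℕ, 1 ≤ n →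
      Nonempty
        (ptsOver (K r) (K (n * r))
            (Limits.pullback f (Spec.map (CommRingCat.ofHom (algebraMap k (K r)))))
            (Limits.pullback.snd f (Spec.map (CommRingCat.ofHom (algebraMap k (K r))))) ≃
          ptsOver k (K (n * r)) X f)) ∧
    (∀ n : ℕ, 1 ≤ n →
      Nat.card
          (ptsOver (K r) (K (n * r))
            (Limits.pullback f (Spec.map (CommRingCat.ofHom (algebraMap k (K r)))))
            (Limits.pullback.snd f (Spec.map (CommRingCat.ofHom (algebraMap k (K r)))))) =
        Nat.card (ptsOver k (K (n * r)) X f)) ∧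
    (∀ n : ℕ, 1 ≤ n →
      ghost n (zetaOfCounts fun m =>
          Nat.card
            (ptsOver (K r) (K (m * r))
              (Limits.pullback f (Spec.map (CommRingCat.ofHom (algebraMap k (K r)))))
              (Limits.pullback.snd f
                (Spec.map (CommRingCat.ofHom (algebraMap k (K r))))))) =
        ghost (n * r) (zetaOfCounts fun m => Nat.card (ptsOver k (K m) X f))) := by
  have hcard : ∀ n : ℕ,
      Nat.card
          (ptsOver (K r) (K (n * r))
            (Limits.pullback f (Spec.map (CommRingCat.ofHom (algebraMap k (K r)))))
            (Limits.pullback.snd f (Spec.map (CommRingCat.ofHom (algebraMap k (K r)))))) =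
        Nat.card (ptsOver k (K (n * r)) X f) := fun n =>
    Nat.card_congr (ptsOverEquiv (K r) (K (n * r)) X f)
  refine ⟨fun n _ => ⟨ptsOverEquiv (K r) (K (n * r)) X f⟩, fun n _ => hcard n, fun n hn => ?_⟩
  rw [FrobAux.ghost_zetaOfCounts _ hn,
    FrobAux.ghost_zetaOfCounts _ (Nat.one_le_iff_ne_zero.mpr (by positivity)), hcard n]

end
end
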